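/- Let a > 0 and L > 0 be real numbers, let B ≥ 1 be an integer, M = 2^B − 1, and suppose L·M/a ≥ 1. Set n = ⌊log₂(L·M/a)⌋. Then for every x ∈ {0,1}^n, the truncated binarized allocation satisfies ((Σ_{b=1}^{n} 2^{b−1} x_b)/M) · a ≤ L. Hence restricting the allocation of an asset with available quantity a to a bitstring of length n = ⌊log₂(L·M/a)⌋ guarantees that the allocated quantity never exceeds the limit L, for every assignment of the bits. -/

import Mathlib

/-- **Structural enforcement of one-to-one limit constraints by bitstring
truncation.**  Let `a > 0` be the available quantity of an asset, `L > 0` the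
allocation limit, `B ≥ 1` the full bitstring length, `M = 2^B − 1`, and suppose
`L·M/a ≥ 1`.  If the bitstring representing the allocation is truncated to
`n = ⌊log₂(L·M/a)⌋` bits, then for every assignment `x ∈ {0,1}^n` of the bits
the allocated quantity `((Σ_{b=1}^n 2^{b−1} x_b)/M)·a` never exceeds `L`. -/
theorem truncated_bits_respect_limit
    (a L : ℝ) (ha : 0 < a) (hL : 0 < L)
    (B : ℕ) (hB : 1 ≤ B) (M : ℕ) (hM : M = 2 ^ B - 1)
    (h1 : 1 ≤ L * M / a)
    (n : ℕ) (hn : (n : ℤ) = ⌊Real.logb 2 (L * M / a)⌋) :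
    ∀ x : Fin n → ℕ, (∀ b, x b ≤ 1) →
      ((∑ b : Fin n, (2 : ℝ) ^ (b : ℕ) * x b) / M) * a ≤ L := by
  intro x hx
  have hMpos : 0 < M := by
    have : (2:ℕ)^1 ≤ 2^B := Nat.pow_le_pow_right (by norm_num) hB
    omega
  have hMR : (0:ℝ) < (M:ℝ) := by exact_mod_cast hMpos
  set t : ℝ := L * M / a with ht
  have htpos : 0 < t := lt_of_lt_of_le one_pos h1
  -- 2^n ≤ t
  have hfloor : (n:ℝ) ≤ Real.logb 2 t := by
    have := Int.floor_le (Real.logb 2 t)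
    rw [← hn] at this
    exact_mod_cast this
  have hpow : (2:ℝ)^n ≤ t := by
    have h2 : (2:ℝ) ^ (n:ℝ) ≤ (2:ℝ) ^ (Real.logb 2 t) :=
      Real.rpow_le_rpow_of_exponent_le (by norm_num) hfloor
    rwa [Real.rpow_logb (by norm_num) (by norm_num) htpos,
      Real.rpow_natCast] at h2
  -- sum bound
  have hsum : (∑ b : Fin n, (2 : ℝ) ^ (b : ℕ) * x b) ≤ (2:ℝ)^n - 1 := by
    have h1' : (∑ b : Fin n, (2 : ℝ) ^ (b : ℕ) * x b)
        ≤ ∑ b : Fin n, (2 : ℝ) ^ (b : ℕ) := by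
      apply Finset.sum_le_sum
      intro b _
      have : (x b : ℝ) ≤ 1 := by exact_mod_cast hx b
      nlinarith [pow_pos (by norm_num : (0:ℝ) < 2) (b:ℕ)]
    have h2' : (∑ b : Fin n, (2 : ℝ) ^ (b : ℕ)) = (2:ℝ)^n - 1 := by
      rw [Fin.sum_univ_eq_sum_range (fun i => (2:ℝ)^i)]
      have := geom_sum_eq (by norm_num : (2:ℝ) ≠ 1) n
      rw [this]; norm_num
    linarith
  have hSle : (∑ b : Fin n, (2 : ℝ) ^ (b : ℕ) * x b) ≤ t := by
    linarith
  rw [div_mul_eq_mul_div, div_le_iff₀ hMR]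
  have : t * a = L * M := by
    rw [ht]; field_simp [ha.ne']
  calc (∑ b : Fin n, (2 : ℝ) ^ (b : ℕ) * x b) * a ≤ t * a :=
        mul_le_mul_of_nonneg_right hSle ha.le
    _ = L * M := this
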